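/- The infimum over (β₀, β) of (1/4)·T_h(y − β₀·1 − Xβ) + λ‖β‖₁ equals the infimum over (β₀, β, α) of (1/2)‖y − β₀·1 − Xβ − α‖₂² + (1/2)T_h(α) + λ‖β‖₁. -/

import Mathlib

/-- Trimmed squares function. -/
noncomputable def Th (n h : ℕ) (r : Fin n → ℝ) : ℝ :=
  sInf {s : ℝ | ∃ Λ : Finset (Fin n), Λ.card = h ∧ s = ∑ i ∈ Λ, r i ^ 2}

lemma Th_bdd (n h : ℕ) (r : Fin n → ℝ) :
    BddBelow {s : ℝ | ∃ Λ : Finset (Fin n), Λ.card = h ∧ s = ∑ i ∈ Λ, r i ^ 2} := by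
  refine ⟨0, ?_⟩
  rintro s ⟨Λ, -, rfl⟩
  positivity

lemma Th_le (n h : ℕ) (r : Fin n → ℝ) (Λ : Finset (Fin n)) (hΛ : Λ.card = h) :
    Th n h r ≤ ∑ i ∈ Λ, r i ^ 2 :=
  csInf_le (Th_bdd n h r) ⟨Λ, hΛ, rfl⟩

lemma Th_attained (n h : ℕ) (hhn : h ≤ n) (r : Fin n → ℝ) :
    ∃ Λ : Finset (Fin n), Λ.card = h ∧ Th n h r = ∑ i ∈ Λ, r i ^ 2 := by
  have hne : {s : ℝ | ∃ Λ : Finset (Fin n), Λ.card = h ∧ s = ∑ i ∈ Λ, r i ^ 2}.Nonempty := by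
    obtain ⟨Λ, -, hΛ⟩ := Finset.exists_subset_card_eq (s := (Finset.univ : Finset (Fin n))) (n := h)
      (by simpa using hhn)
    exact ⟨_, Λ, hΛ, rfl⟩
  have hfin : {s : ℝ | ∃ Λ : Finset (Fin n), Λ.card = h ∧ s = ∑ i ∈ Λ, r i ^ 2}.Finite := by
    apply Set.Finite.subset (Set.finite_range fun Λ : Finset (Fin n) => ∑ i ∈ Λ, r i ^ 2)
    rintro s ⟨Λ, -, rfl⟩; exact ⟨Λ, rfl⟩
  obtain ⟨Λ, hΛ, hs⟩ := hne.csInf_mem hfin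
  exact ⟨Λ, hΛ, hs⟩

lemma Th_nonneg (n h : ℕ) (hhn : h ≤ n) (r : Fin n → ℝ) : 0 ≤ Th n h r := by
  obtain ⟨Λ, -, hΛ⟩ := Th_attained n h hhn r
  rw [hΛ]; positivity

/-- the SLTS and STRLS problems have the same optimal value. -/
theorem stmt_6 (n d h : ℕ) (hh : 1 ≤ h) (hhn : h ≤ n)
    (y : Fin n → ℝ) (X : Matrix (Fin n) (Fin d) ℝ) (lam : ℝ) (hlam : 0 < lam) :
    sInf (Set.range fun p : ℝ × (Fin d → ℝ) =>
        (1 / 4) * Th n h (fun i => y i - p.1 - X.mulVec p.2 i) + lam * ∑ j, |p.2 j|) =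
      sInf (Set.range fun q : ℝ × (Fin d → ℝ) × (Fin n → ℝ) =>
        (1 / 2) * ∑ i, (y i - q.1 - X.mulVec q.2.1 i - q.2.2 i) ^ 2
          + (1 / 2) * Th n h q.2.2 + lam * ∑ j, |q.2.1 j|) := by
  set f : ℝ × (Fin d → ℝ) → ℝ := fun p =>
    (1 / 4) * Th n h (fun i => y i - p.1 - X.mulVec p.2 i) + lam * ∑ j, |p.2 j| with hf
  set g : ℝ × (Fin d → ℝ) × (Fin n → ℝ) → ℝ := fun q =>
    (1 / 2) * ∑ i, (y i - q.1 - X.mulVec q.2.1 i - q.2.2 i) ^ 2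
      + (1 / 2) * Th n h q.2.2 + lam * ∑ j, |q.2.1 j| with hg
  have habs : ∀ (v : Fin d → ℝ), 0 ≤ lam * ∑ j, |v j| := fun v =>
    mul_nonneg hlam.le (Finset.sum_nonneg fun j _ => abs_nonneg _)
  have hbf : BddBelow (Set.range f) := by
    refine ⟨0, ?_⟩
    rintro _ ⟨p, rfl⟩
    exact add_nonneg (mul_nonneg (by norm_num) (Th_nonneg n h hhn _)) (habs p.2)
  have hbg : BddBelow (Set.range g) := by
    refine ⟨0, ?_⟩
    rintro _ ⟨q, rfl⟩
    refine add_nonneg (add_nonneg ?_ (mul_nonneg (by norm_num) (Th_nonneg n h hhn _))) (habs q.2.1)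
    positivity
  apply le_antisymm
  · -- sInf f ≤ sInf g : for each q, sInf f ≤ f (q.1, q.2.1) ≤ g q
    refine le_csInf (Set.range_nonempty g) ?_
    rintro _ ⟨q, rfl⟩
    refine le_trans (csInf_le hbf ⟨(q.1, q.2.1), rfl⟩) ?_
    set r : Fin n → ℝ := fun i => y i - q.1 - X.mulVec q.2.1 i with hr
    obtain ⟨Λ, hΛc, hΛ⟩ := Th_attained n h hhn q.2.2
    have h1 : Th n h r ≤ ∑ i ∈ Λ, r i ^ 2 := Th_le n h r Λ hΛc
    have h2 : ∑ i ∈ Λ, (r i - q.2.2 i) ^ 2 ≤ ∑ i, (r i - q.2.2 i) ^ 2 :=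
      Finset.sum_le_sum_of_subset_of_nonneg (Finset.subset_univ Λ)
        (fun i _ _ => by positivity)
    have h3 : (1 / 4 : ℝ) * ∑ i ∈ Λ, r i ^ 2 ≤
        (1 / 2) * ∑ i ∈ Λ, (r i - q.2.2 i) ^ 2 + (1 / 2) * ∑ i ∈ Λ, q.2.2 i ^ 2 := by
      have := Finset.sum_le_sum (s := Λ)
        (f := fun i => (1 / 4 : ℝ) * r i ^ 2)
        (g := fun i => (1 / 2 : ℝ) * (r i - q.2.2 i) ^ 2 + (1 / 2) * q.2.2 i ^ 2)
        (fun i _ => by nlinarith [sq_nonneg (r i / 2 - q.2.2 i)])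
      rw [Finset.sum_add_distrib, ← Finset.mul_sum, ← Finset.mul_sum, ← Finset.mul_sum] at this
      linarith
    simp only [hf, hg]
    have : (fun i => y i - q.1 - X.mulVec q.2.1 i) = r := rfl
    rw [this, hΛ]
    have h4 : ∀ i, y i - q.1 - X.mulVec q.2.1 i - q.2.2 i = r i - q.2.2 i := fun i => rfl
    simp only [h4]
    nlinarith [h1, h2, h3]
  · -- sInf g ≤ sInf f
    refine le_csInf (Set.range_nonempty f) ?_
    rintro _ ⟨p, rfl⟩
    set r : Fin n → ℝ := fun i => y i - p.1 - X.mulVec p.2 i with hr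
    obtain ⟨Λ, hΛc, hΛ⟩ := Th_attained n h hhn r
    set α : Fin n → ℝ := fun i => if i ∈ Λ then r i / 2 else r i with hα
    refine le_trans (csInf_le hbg ⟨(p.1, p.2, α), rfl⟩) ?_
    simp only [hg, hf]
    have h4 : ∀ i, y i - p.1 - X.mulVec p.2 i - α i = r i - α i := fun i => rfl
    simp only [h4]
    have h1 : ∑ i, (r i - α i) ^ 2 = ∑ i ∈ Λ, (r i / 2) ^ 2 := by
      rw [← Finset.sum_subset (Finset.subset_univ Λ)
        (fun i _ hi => by simp [hα, hi])]
      exact Finset.sum_congr rfl fun i hi => by simp [hα, hi]; ring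
    have h2 : Th n h α ≤ ∑ i ∈ Λ, (r i / 2) ^ 2 := by
      refine le_trans (Th_le n h α Λ hΛc) ?_
      exact le_of_eq (Finset.sum_congr rfl fun i hi => by simp [hα, hi])
    have h3 : (fun i => y i - p.1 - X.mulVec p.2 i) = r := rfl
    rw [h3, hΛ, h1]
    have h5 : ∑ i ∈ Λ, (r i / 2) ^ 2 = (1 / 4) * ∑ i ∈ Λ, r i ^ 2 := by
      rw [Finset.mul_sum]; exact Finset.sum_congr rfl fun i _ => by ring
    nlinarith [h2, h5]
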